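/- Let V be a 4-dimensional complex vector space with a nondegenerate alternating bilinear form σ, and let A ∈ 𝔰𝔭(V,σ) with A ∘ A = 0 and rank A = 2. Then there exists s ∈ W with τ(s) ≠ s such that the fiber {t ∈ W : ε(t) = A} is exactly the two-element set {s, τ(s)}; i.e. the fiber of ε over a rank-2 element of Z consists of exactly two points interchanged by τ. -/

import Mathlib

open TensorProduct

/-- The endomorphism `ε(v ⊗ w) : x ↦ σ(v,x)·w + σ(w,x)·v` of `V`, for `v w : V`. -/
def eps {V : Type*} [AddCommGroup V] [Module ℂ V]
    (σ : V →ₗ[ℂ] V →ₗ[ℂ] ℂ) (v w : V) : V →ₗ[ℂ] V :=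
  (σ v).smulRight w + (σ w).smulRight v

section Aux

variable {V : Type*} [AddCommGroup V] [Module ℂ V]

/-- A rank-2 map cannot have range inside a line. -/
lemma aux_not_line [FiniteDimensional ℂ V] (A : V →ₗ[ℂ] V)
    (hrk : Module.finrank ℂ (LinearMap.range A) = 2) (x : V)
    (h : ∀ y, A y ∈ Submodule.span ℂ ({x} : Set V)) : False := by
  have hle : LinearMap.range A ≤ Submodule.span ℂ ({x} : Set V) := by
    rintro _ ⟨y, rfl⟩; exact h y
  have h1 : Module.finrank ℂ (LinearMap.range A)
      ≤ Module.finrank ℂ (Submodule.span ℂ ({x} : Set V)) := Submodule.finrank_mono hle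
  rcases eq_or_ne x 0 with rfl | hx
  · rw [hrk, Submodule.span_zero_singleton, finrank_bot] at h1; omega
  · rw [hrk, finrank_span_singleton hx] at h1; omega

/-- If a `σ`-symmetric operator has all "diagonal" values zero, it is zero. -/
lemma aux_noniso (σ : V →ₗ[ℂ] V →ₗ[ℂ] ℂ)
    (hnd : ∀ v : V, (∀ w : V, σ v w = 0) → v = 0)
    (B : V →ₗ[ℂ] V) (hs : ∀ x y : V, σ (B x) y = σ (B y) x)
    (hB : B ≠ 0) : ∃ x, σ (B x) x ≠ 0 := by
  by_contra h
  push_neg at h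
  apply hB
  ext x
  show B x = 0
  apply hnd
  intro y
  have key : σ (B x) y + σ (B y) x = 0 := by
    have h1 := h (x + y)
    simp only [map_add, LinearMap.add_apply] at h1
    linear_combination h1 - h x - h y
  linear_combination (key + hs x y) / 2

/-- Linear independence from rank 2. -/
lemma aux_indep [FiniteDimensional ℂ V] (σ : V →ₗ[ℂ] V →ₗ[ℂ] ℂ) (A : V →ₗ[ℂ] V)
    (hrk : Module.finrank ℂ (LinearMap.range A) = 2)
    (v w : V) (h : ∀ y, A y = σ v y • w + σ w y • v) :
    ∀ c d : ℂ, c • v + d • w = 0 → c = 0 ∧ d = 0 := by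
  intro c d hcd
  by_cases hd : d = 0
  · subst hd
    constructor
    · by_contra hc
      rw [zero_smul, add_zero] at hcd
      have hv : v = 0 := by
        have := smul_eq_zero.1 hcd
        tauto
      apply aux_not_line A hrk 0
      intro y
      rw [h y, hv]
      simp
    · rfl
  · exfalso
    have h3 : d • w = (-c) • v := by
      linear_combination (norm := module) hcd
    have hw : w = (d⁻¹ * (-c)) • v := by
      rw [← smul_smul, ← h3, smul_smul, inv_mul_cancel₀ hd, one_smul]
    apply aux_not_line A hrk v
    intro y
    rw [h y]
    apply Submodule.add_mem
    · rw [hw, smul_smul]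
      exact Submodule.smul_mem _ _ (Submodule.mem_span_singleton_self v)
    · exact Submodule.smul_mem _ _ (Submodule.mem_span_singleton_self v)

/-- Dual vector to an independent pair. -/
lemma aux_dual (σ : V →ₗ[ℂ] V →ₗ[ℂ] ℂ)
    (hnd : ∀ v : V, (∀ w : V, σ v w = 0) → v = 0)
    (v w : V) (hvw : ∀ c d : ℂ, c • v + d • w = 0 → c = 0 ∧ d = 0) :
    ∃ y, σ v y = 1 ∧ σ w y = 0 := by
  have hw : w ≠ 0 := by
    intro h0
    have := (hvw 0 1 (by simp [h0])).2
    norm_num at this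
  obtain ⟨z, hz⟩ : ∃ z, σ w z ≠ 0 := by
    by_contra h; push_neg at h; exact hw (hnd w h)
  obtain ⟨y0, hy0⟩ : ∃ y0, σ v y0 - (σ v z / σ w z) * σ w y0 ≠ 0 := by
    by_contra h
    push_neg at h
    have hu : v - (σ v z / σ w z) • w = 0 := by
      apply hnd
      intro y
      rw [map_sub, map_smul, LinearMap.sub_apply, LinearMap.smul_apply, smul_eq_mul]
      exact h y
    have := (hvw 1 (-(σ v z / σ w z)) (by linear_combination (norm := module) hu)).1
    norm_num at this
  refine ⟨(σ v y0 - (σ v z / σ w z) * σ w y0)⁻¹ • (y0 - (σ w y0 / σ w z) • z), ?_, ?_⟩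
  · rw [map_smul, smul_eq_mul, map_sub, map_smul, smul_eq_mul]
    have he : σ v y0 - σ w y0 / σ w z * σ v z = σ v y0 - (σ v z / σ w z) * σ w y0 := by
      ring
    rw [he, inv_mul_cancel₀ hy0]
  · rw [map_smul, smul_eq_mul, map_sub, map_smul, smul_eq_mul]
    have he : σ w y0 - σ w y0 / σ w z * σ w z = 0 := by
      field_simp
      ring
    rw [he, mul_zero]

end Aux

/-- Let `V` be a 4-dimensional complex vector space with a nondegenerate
alternating bilinear form `σ`, and let `A ∈ 𝔰𝔭(V,σ)` with `A ∘ A = 0` and `rank A = 2`.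
Then there exists `s = v ⊗ w ∈ W` with `τ(s) ≠ s` such that the fiber
`{t ∈ W : ε(t) = A}` is exactly the two-element set `{s, τ(s)} = {v ⊗ w, w ⊗ v}`;
i.e. the fiber of `ε` over a rank-2 element of `Z` consists of exactly two points
interchanged by `τ`. -/
theorem eps_fiber_over_rank_two
    {V : Type*} [AddCommGroup V] [Module ℂ V] [FiniteDimensional ℂ V]
    (hdim : Module.finrank ℂ V = 4)
    (σ : V →ₗ[ℂ] V →ₗ[ℂ] ℂ)
    (halt : ∀ v : V, σ v v = 0)
    (hnd : ∀ v : V, (∀ w : V, σ v w = 0) → v = 0)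
    (A : V →ₗ[ℂ] V)
    (hA : ∀ v w : V, σ (A v) w + σ v (A w) = 0)
    (hA2 : A ∘ₗ A = 0)
    (hrk : Module.finrank ℂ (LinearMap.range A) = 2) :
    ∃ v w : V, σ v w = 0 ∧ v ⊗ₜ[ℂ] w ≠ w ⊗ₜ[ℂ] v ∧
      {t : V ⊗[ℂ] V | ∃ v' w' : V, σ v' w' = 0 ∧ t = v' ⊗ₜ[ℂ] w' ∧ eps σ v' w' = A} =
        {v ⊗ₜ[ℂ] w, w ⊗ₜ[ℂ] v} := by
  classical
  have hanti : ∀ x y : V, σ x y = -σ y x := by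
    intro x y
    have h : σ x x + σ x y + (σ y x + σ y y) = 0 := by
      have := halt (x + y)
      simp only [map_add, LinearMap.add_apply] at this
      linear_combination this
    linear_combination h - halt x - halt y
  have hsymm : ∀ x y : V, σ (A x) y = σ (A y) x := by
    intro x y
    have h1 := hA x y
    have h2 := hanti x (A y)
    linear_combination h1 - h2
  have hAne : A ≠ 0 := by
    intro h0
    rw [h0, LinearMap.range_zero, finrank_bot] at hrk
    norm_num at hrk
  -- first peeling
  obtain ⟨x1, hx1⟩ := aux_noniso σ hnd A hsymm hAne
  set a : ℂ := σ (A x1) x1 with ha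
  set v1 : V := A x1 with hv1
  set A1 : V →ₗ[ℂ] V := A - a⁻¹ • (σ v1).smulRight v1 with hA1def
  have hA1 : ∀ y, A1 y = A y - (a⁻¹ * σ v1 y) • v1 := by
    intro y
    rw [hA1def]
    simp only [LinearMap.sub_apply, LinearMap.smul_apply, LinearMap.smulRight_apply, smul_smul]
  have hsymm1 : ∀ x y : V, σ (A1 x) y = σ (A1 y) x := by
    intro x y
    rw [hA1 x, hA1 y]
    simp only [map_sub, map_smul, LinearMap.sub_apply, LinearMap.smul_apply, smul_eq_mul]
    linear_combination hsymm x y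
  have hker1 : ∀ k, A k = 0 → A1 k = 0 := by
    intro k hk
    have hv1k : σ v1 k = 0 := by
      rw [hv1, hsymm x1 k, hk]
      simp
    rw [hA1 k, hk, hv1k]
    simp
  have hA1x1 : A1 x1 = 0 := by
    rw [hA1 x1, ← hv1, ← ha, inv_mul_cancel₀ hx1, one_smul, sub_self]
  have hv1ne : v1 ≠ 0 := by
    intro h0
    apply hx1
    rw [ha, h0]
    simp
  have hAx1ne : A x1 ≠ 0 := by
    rw [← hv1]
    exact hv1ne
  have hA1ne : A1 ≠ 0 := by
    intro h0
    apply aux_not_line A hrk v1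
    intro y
    have := hA1 y
    rw [h0] at this
    simp only [LinearMap.zero_apply] at this
    refine Submodule.mem_span_singleton.2 ⟨a⁻¹ * σ v1 y, ?_⟩
    linear_combination (norm := module) this
  -- second peeling
  obtain ⟨x2, hx2⟩ := aux_noniso σ hnd A1 hsymm1 hA1ne
  set c : ℂ := σ (A1 x2) x2 with hc
  set v2 : V := A1 x2 with hv2
  set A2 : V →ₗ[ℂ] V := A1 - c⁻¹ • (σ v2).smulRight v2 with hA2def
  have hA2' : ∀ y, A2 y = A1 y - (c⁻¹ * σ v2 y) • v2 := by
    intro y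
    rw [hA2def]
    simp only [LinearMap.sub_apply, LinearMap.smul_apply, LinearMap.smulRight_apply, smul_smul]
  have hker2 : ∀ k, A1 k = 0 → A2 k = 0 := by
    intro k hk
    have hv2k : σ v2 k = 0 := by
      rw [hv2, hsymm1 x2 k, hk]
      simp
    rw [hA2' k, hk, hv2k]
    simp
  have hA2x2 : A2 x2 = 0 := by
    rw [hA2' x2, ← hv2, ← hc, inv_mul_cancel₀ hx2, one_smul, sub_self]
  have hv2ne : v2 ≠ 0 := by
    intro h0
    apply hx2
    rw [hc, h0]
    simp
  have hA1x2ne : A1 x2 ≠ 0 := by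
    rw [← hv2]
    exact hv2ne
  -- dimension count: A2 = 0
  have hkerA : Module.finrank ℂ (LinearMap.ker A) = 2 := by
    have := LinearMap.finrank_range_add_finrank_ker A
    rw [hrk, hdim] at this
    omega
  have hlt1 : LinearMap.ker A < LinearMap.ker A1 := by
    refine lt_of_le_of_ne (fun k hk => LinearMap.mem_ker.2 (hker1 k (LinearMap.mem_ker.1 hk))) ?_
    intro he
    have : x1 ∈ LinearMap.ker A := he ▸ LinearMap.mem_ker.2 hA1x1
    exact hAx1ne (LinearMap.mem_ker.1 this)
  have hlt2 : LinearMap.ker A1 < LinearMap.ker A2 := by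
    refine lt_of_le_of_ne (fun k hk => LinearMap.mem_ker.2 (hker2 k (LinearMap.mem_ker.1 hk))) ?_
    intro he
    have : x2 ∈ LinearMap.ker A1 := he ▸ LinearMap.mem_ker.2 hA2x2
    exact hA1x2ne (LinearMap.mem_ker.1 this)
  have hd1 : Module.finrank ℂ (LinearMap.ker A) < Module.finrank ℂ (LinearMap.ker A1) :=
    Submodule.finrank_lt_finrank_of_lt hlt1
  have hd2 : Module.finrank ℂ (LinearMap.ker A1) < Module.finrank ℂ (LinearMap.ker A2) :=
    Submodule.finrank_lt_finrank_of_lt hlt2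
  have hd3 : Module.finrank ℂ (LinearMap.ker A2) ≤ 4 := hdim ▸ Submodule.finrank_le _
  have hkertop : LinearMap.ker A2 = ⊤ := Submodule.eq_top_of_finrank_eq (by omega)
  have hA2zero : ∀ y, A2 y = 0 := by
    intro y
    exact LinearMap.mem_ker.1 (hkertop ▸ Submodule.mem_top)
  have hdecomp : ∀ y, A y = (a⁻¹ * σ v1 y) • v1 + (c⁻¹ * σ v2 y) • v2 := by
    intro y
    have h1 := hA1 y
    have h2 := hA2' y
    rw [hA2zero y] at h2
    linear_combination (norm := module) - h1 - h2
  -- construct v, w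
  obtain ⟨p, hp⟩ : ∃ p : ℂ, p ^ 2 = (2 * a)⁻¹ := IsAlgClosed.exists_pow_nat_eq _ two_pos
  obtain ⟨q, hq⟩ : ∃ q : ℂ, q ^ 2 = -(2 * c)⁻¹ := IsAlgClosed.exists_pow_nat_eq _ two_pos
  set v : V := p • v1 + q • v2 with hvdef
  set w : V := p • v1 - q • v2 with hwdef
  have hA' : ∀ y, A y = σ v y • w + σ w y • v := by
    intro y
    rw [hdecomp y, hvdef, hwdef]
    simp only [map_add, map_sub, map_smul, LinearMap.add_apply, LinearMap.sub_apply,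
      LinearMap.smul_apply, smul_eq_mul]
    match_scalars
    · have ha2 : a⁻¹ = 2 * p ^ 2 := by
        rw [hp, mul_inv]
        ring
      linear_combination σ v1 y * ha2
    · have hc2 : c⁻¹ = -(2 * q ^ 2) := by
        rw [hq, mul_inv]
        ring
      linear_combination σ v2 y * hc2
  have hind := aux_indep σ A hrk v w hA'
  obtain ⟨y1, hy1v, hy1w⟩ := aux_dual σ hnd v w hind
  obtain ⟨y2, hy2w, hy2v⟩ := aux_dual σ hnd w v
    (fun c d h => ((hind d c (by linear_combination (norm := module) h)).symm : _ ∧ _))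
  have hwne : w ≠ 0 := by
    intro h0
    have := (hind 0 1 (by simp [h0])).2
    norm_num at this
  have hvne : v ≠ 0 := by
    intro h0
    have := (hind 1 0 (by simp [h0])).1
    norm_num at this
  have hAy1 : A y1 = w := by
    rw [hA' y1, hy1v, hy1w]
    simp
  have hAy2 : A y2 = v := by
    rw [hA' y2, hy2v, hy2w]
    simp
  have hAw : A w = 0 := by
    rw [← hAy1, ← LinearMap.comp_apply, hA2, LinearMap.zero_apply]
  have hσvw : σ v w = 0 := by
    have h1 : A w = σ v w • w + σ w w • v := hA' w
    rw [hAw, halt w, zero_smul, add_zero] at h1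
    rcases smul_eq_zero.1 h1.symm with h | h
    · exact h
    · exact absurd h hwne
  have hσwv : σ w v = 0 := by
    rw [hanti w v, hσvw, neg_zero]
  have hepsvw : eps σ v w = A := by
    ext y
    simp only [eps, LinearMap.add_apply, LinearMap.smulRight_apply]
    exact (hA' y).symm
  have hepswv : eps σ w v = A := by
    rw [← hepsvw]
    unfold eps
    abel
  -- distinguishing functional
  have hne : v ⊗ₜ[ℂ] w ≠ w ⊗ₜ[ℂ] v := by
    intro heq
    have h1 : TensorProduct.lift ((LinearMap.mul ℂ ℂ).compl₁₂ (σ.flip y1) (σ.flip y2))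
        (v ⊗ₜ[ℂ] w) = 1 := by
      rw [TensorProduct.lift.tmul, LinearMap.compl₁₂_apply]
      simp [LinearMap.flip_apply, hy1v, hy2w]
    have h2 : TensorProduct.lift ((LinearMap.mul ℂ ℂ).compl₁₂ (σ.flip y1) (σ.flip y2))
        (w ⊗ₜ[ℂ] v) = 0 := by
      rw [TensorProduct.lift.tmul, LinearMap.compl₁₂_apply]
      simp [LinearMap.flip_apply, hy1w, hy2v]
    rw [heq, h2] at h1
    norm_num at h1
  refine ⟨v, w, hσvw, hne, ?_⟩
  ext t
  simp only [Set.mem_setOf_eq, Set.mem_insert_iff, Set.mem_singleton_iff]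
  constructor
  · rintro ⟨v', w', hσ', rfl, hε'⟩
    have h'' : ∀ y, A y = σ v' y • w' + σ w' y • v' := by
      intro y
      have := LinearMap.congr_fun hε' y
      simp only [eps, LinearMap.add_apply, LinearMap.smulRight_apply] at this
      exact this.symm
    have hind' := aux_indep σ A hrk v' w' h''
    obtain ⟨y1', hy1v', hy1w'⟩ := aux_dual σ hnd v' w' hind'
    obtain ⟨y2', hy2w', hy2v'⟩ := aux_dual σ hnd w' v'
      (fun c d h => ((hind' d c (by linear_combination (norm := module) h)).symm : _ ∧ _))
    -- v' = A y2', w' = A y1'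
    have hv' : v' = σ w y2' • v + σ v y2' • w := by
      have h1 : A y2' = v' := by
        rw [h'' y2', hy2v', hy2w']
        simp
      rw [← h1, hA' y2']
      module
    have hw' : w' = σ w y1' • v + σ v y1' • w := by
      have h1 : A y1' = w' := by
        rw [h'' y1', hy1v', hy1w']
        simp
      rw [← h1, hA' y1']
      module
    set aa : ℂ := σ w y2' with haa
    set bb : ℂ := σ v y2' with hbb
    set cc : ℂ := σ w y1' with hcc
    set dd : ℂ := σ v y1' with hdd
    -- evaluate master equation at y1 and y2
    have heq1 : (2 * aa * cc) • v + (aa * dd + cc * bb - 1) • w = 0 := by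
      have h1 : σ v' y1 • w' + σ w' y1 • v' = w := by
        rw [← h'' y1, hAy1]
      rw [hv', hw'] at h1
      simp only [map_add, map_smul, LinearMap.add_apply, LinearMap.smul_apply, smul_eq_mul,
        hy1v, hy1w] at h1
      linear_combination (norm := module) h1
    have heq2 : (aa * dd + cc * bb - 1) • v + (2 * bb * dd) • w = 0 := by
      have h1 : σ v' y2 • w' + σ w' y2 • v' = v := by
        rw [← h'' y2, hAy2]
      rw [hv', hw'] at h1
      simp only [map_add, map_smul, LinearMap.add_apply, LinearMap.smul_apply, smul_eq_mul,
        hy1v, hy1w, hy2v, hy2w] at h1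
      linear_combination (norm := module) h1
    obtain ⟨e1, e2⟩ := hind _ _ heq1
    obtain ⟨e3, e4⟩ := hind _ _ heq2
    have hac : aa * cc = 0 := by linear_combination e1 / 2
    have hbd : bb * dd = 0 := by linear_combination e4 / 2
    rcases mul_eq_zero.1 hac with haz | hcz
    · -- aa = 0 : t = w ⊗ v
      right
      have hcb : cc * bb = 1 := by linear_combination e2 - dd * haz
      have hbz : bb ≠ 0 := by
        intro h0
        rw [h0, mul_zero] at hcb
        norm_num at hcb
      have hdz : dd = 0 := by
        rcases mul_eq_zero.1 hbd with h | h
        · exact absurd h hbz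
        · exact h
      rw [hv', hw', haz, hdz]
      simp only [zero_smul, add_zero, zero_add]
      rw [← TensorProduct.smul_tmul', TensorProduct.tmul_smul, smul_smul, mul_comm bb cc,
        hcb, one_smul]
    · -- cc = 0 : t = v ⊗ w
      left
      have had : aa * dd = 1 := by linear_combination e2 - bb * hcz
      have hdz : dd ≠ 0 := by
        intro h0
        rw [h0, mul_zero] at had
        norm_num at had
      have hbz : bb = 0 := by
        rcases mul_eq_zero.1 hbd with h | h
        · exact h
        · exact absurd h hdz
      rw [hv', hw', hcz, hbz]
      simp only [zero_smul, add_zero, zero_add]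
      rw [← TensorProduct.smul_tmul', TensorProduct.tmul_smul, smul_smul, had, one_smul]
  · rintro (rfl | rfl)
    · exact ⟨v, w, hσvw, rfl, hepsvw⟩
    · exact ⟨w, v, hσwv, rfl, hepswv⟩
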